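/- Let V be a finite-dimensional vector space and M a monoid of linear endomorphisms of V generated by projections of corank 1 (idempotent linear maps whose image has codimension 1). A subspace W of V is invariant under M (i.e. m(W) ⊆ W for all m ∈ M) if and only if for every generating projection p either ker(p) ⊆ W or W ⊆ im(p). -/
import Mathlib


/-- Let `V` be a finite-dimensional vector space and `M` the monoid of
linear endomorphisms of `V` generated by a set `P` of projections of corank 1
(idempotents of nullity 1).  A subspace `W` is invariant under `M` iff for every
generating projection `p`, either `ker p ⊆ W` or `W ⊆ im p`. -/
theorem stmt_0 {F V : Type*} [Field F] [AddCommGroup V] [Module F V]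
    [FiniteDimensional F V]
    (P : Set (Module.End F V))
    (hP : ∀ p ∈ P, p * p = p ∧ Module.finrank F (LinearMap.ker p) = 1)
    (W : Submodule F V) :
    (∀ m ∈ Submonoid.closure P, ∀ w ∈ W, m w ∈ W) ↔
      (∀ p ∈ P, LinearMap.ker p ≤ W ∨ W ≤ LinearMap.range p) := by
  constructor
  · intro hInv p hp
    by_cases hW : W ≤ LinearMap.range p
    · exact Or.inr hW
    · left
      -- find w ∈ W with p w ≠ w
      obtain ⟨w, hwW, hwR⟩ : ∃ w ∈ W, w ∉ LinearMap.range p := by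
        by_contra h
        push_neg at h
        exact hW h
      have hpw : p w ∈ W := hInv p (Submonoid.subset_closure hp) w hwW
      have hx : w - p w ∈ LinearMap.ker p := by
        have hidem := (hP p hp).1
        have : p (p w) = p w := by
          have := congrArg (fun q => q w) hidem
          simpa [Module.End.mul_apply] using this
        simp [LinearMap.mem_ker, map_sub, this]
      have hxne : w - p w ≠ 0 := by
        intro h
        apply hwR
        exact ⟨w, (sub_eq_zero.mp h).symm⟩
      have hxW : w - p w ∈ W := W.sub_mem hwW hpw
      -- ker p is 1-dimensional, so spanned by w - p w
      obtain ⟨v, hv0, hv⟩ := (finrank_eq_one_iff' (K := F) (V := LinearMap.ker p)).mp (hP p hp).2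
      intro y hy
      obtain ⟨c, hc⟩ := hv ⟨y, hy⟩
      obtain ⟨d, hd⟩ := hv ⟨w - p w, hx⟩
      have hd' : d • (v : V) = w - p w := by
        have := congrArg (Subtype.val) hd
        simpa using this
      have hd0 : d ≠ 0 := by
        intro h
        apply hxne
        rw [← hd', h, zero_smul]
      have hvW : (v : V) ∈ W := by
        have hv' : (v : V) = d⁻¹ • (w - p w) := by
          rw [← hd', smul_smul, inv_mul_cancel₀ hd0, one_smul]
        rw [hv']
        exact W.smul_mem _ hxW
      have hc' : c • (v : V) = y := by
        have := congrArg (Subtype.val) hc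
        simpa using this
      rw [← hc']
      exact W.smul_mem _ hvW
  · intro h m hm
    induction hm using Submonoid.closure_induction with
    | mem p hp =>
      intro w hw
      rcases h p hp with hker | hrange
      · have hx : w - p w ∈ LinearMap.ker p := by
          have hidem := (hP p hp).1
          have : p (p w) = p w := by
            have := congrArg (fun q => q w) hidem
            simpa [Module.End.mul_apply] using this
          simp [LinearMap.mem_ker, map_sub, this]
        have : p w = w - (w - p w) := by abel
        rw [this]
        exact W.sub_mem hw (hker hx)
      · obtain ⟨v, hv⟩ := hrange hw
        have hidem := (hP p hp).1
        have : p (p v) = p v := by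
          have := congrArg (fun q => q v) hidem
          simpa [Module.End.mul_apply] using this
        rw [← hv, this, hv]
        exact hw
    | one => intro w hw; simpa using hw
    | mul a b _ _ ha hb =>
      intro w hw
      have : (a * b) w = a (b w) := rfl
      rw [this]
      exact ha _ (hb _ hw)
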